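/- Let k1V, k2, k3, k4 > 0. Set the CMA effective death rate k̄2 = k2·k3/(k2+k3+k4) and λ_CMA = k1V/k̄2 = k1V·(k2+k3+k4)/(k2·k3), and let λ̄1 = k1V·(k2+k4)/(k2·k3), λ̄2 = k1V/k2 and π(x1,x2) = e^(−λ̄1)λ̄1^{x1}/x1! · e^(−λ̄2)λ̄2^{x2}/x2!. Then for every s ∈ ℕ, e^(−λ_CMA) λ_CMA^s / s! = Σ_{n=0}^{s} π(n, s−n). That is, the invariant distribution of the CMA effective slow chain (the birth–death chain with birth rate k1V and death rate k̄2·n, whose stationary distribution is Poisson(λ_CMA)) is exactly equal to the marginal distribution of the slow variable S = X1 + X2 under the invariant distribution of the full linear system. -/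

import Mathlib

open Finset

/-- The Poisson(λ_CMA) invariant distribution of the CMA effective slow chain,
with `λ_CMA = k1V(k2+k3+k4)/(k2k3)`, is exactly the marginal of the slow
variable `S = X1 + X2` under the product-Poisson invariant distribution of the
full linear system. -/
theorem CMA_effective_invariant_eq_slow_marginal
    (k1V k2 k3 k4 : ℝ) (h1 : 0 < k1V) (h2 : 0 < k2) (h3 : 0 < k3) (h4 : 0 < k4)
    (kbar lamCMA lam1 lam2 : ℝ)
    (hkbar : kbar = k2 * k3 / (k2 + k3 + k4))
    (hlamCMA : lamCMA = k1V / kbar)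
    (hlamCMA' : lamCMA = k1V * (k2 + k3 + k4) / (k2 * k3))
    (hlam1 : lam1 = k1V * (k2 + k4) / (k2 * k3))
    (hlam2 : lam2 = k1V / k2)
    (pi : ℕ → ℕ → ℝ)
    (hpi : ∀ x1 x2 : ℕ, pi x1 x2 =
      (Real.exp (-lam1) * lam1 ^ x1 / x1.factorial) *
        (Real.exp (-lam2) * lam2 ^ x2 / x2.factorial)) :
    ∀ s : ℕ,
      Real.exp (-lamCMA) * lamCMA ^ s / s.factorial =
        ∑ n ∈ Finset.range (s + 1), pi n (s - n) := by
  intro s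
  have hsum : lamCMA = lam1 + lam2 := by
    rw [hlamCMA', hlam1, hlam2]
    field_simp
    ring
  have key : (lam1 + lam2) ^ s =
      ∑ n ∈ Finset.range (s + 1), lam1 ^ n * lam2 ^ (s - n) * (s.choose n) := add_pow lam1 lam2 s
  calc Real.exp (-lamCMA) * lamCMA ^ s / s.factorial
      = Real.exp (-(lam1 + lam2)) * (lam1 + lam2) ^ s / s.factorial := by rw [hsum]
    _ = ∑ n ∈ Finset.range (s + 1), pi n (s - n) := by
        rw [key, Finset.mul_sum, Finset.sum_div]
        apply Finset.sum_congr rfl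
        intro n hn
        rw [hpi, neg_add, Real.exp_add]
        have hn' : n ≤ s := Nat.lt_succ_iff.mp (Finset.mem_range.mp hn)
        have hfac : (s.choose n : ℝ) = s.factorial / (n.factorial * (s - n).factorial) :=
          Nat.cast_choose ℝ hn' 
        have h0 : (n.factorial : ℝ) ≠ 0 := Nat.cast_ne_zero.mpr n.factorial_ne_zero
        have h1 : ((s - n).factorial : ℝ) ≠ 0 := Nat.cast_ne_zero.mpr (s - n).factorial_ne_zero
        have h2 : (s.factorial : ℝ) ≠ 0 := Nat.cast_ne_zero.mpr s.factorial_ne_zero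
        rw [hfac]
        field_simp
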